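/- arXiv:1605.04503 — 3 statements merged into one kernel-verified Lean document; each statement's English description precedes it below -/
import Mathlib

section
/- For all m ≥ 3, the kernel numbers satisfy k_m = k_{m-3} + t_{m-4}, where t is the Tribonacci number sequence. -/
/-- Tribonacci numbers, index-shifted so that `trib n` represents t_{n-2}:
`trib 0 = t₋₂ = 0`, `trib 1 = t₋₁ = 1`, `trib 2 = t₀ = 1`, and
`trib (n+3) = trib (n+2) + trib (n+1) + trib n`. -/
def trib : ℕ → ℕ
  | 0 => 0
  | 1 => 1
  | 2 => 1
  | n + 3 => trib (n + 2) + trib (n + 1) + trib n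

/-- Kernel numbers: k₀ = 0, k₁ = k₂ = 1, k_m = k_{m-1} + k_{m-2} + k_{m-3} - 1 for m ≥ 3. -/
def ker : ℕ → ℕ
  | 0 => 0
  | 1 => 1
  | 2 => 1
  | n + 3 => ker (n + 2) + ker (n + 1) + ker n - 1

lemma ker_pos : ∀ k, 1 ≤ ker (k + 1)
  | 0 => by decide
  | 1 => by decide
  | k + 2 => by
      have a := ker_pos k
      have b := ker_pos (k + 1)
      show 1 ≤ ker (k + 2) + ker (k + 1) + ker k - 1
      have b' : 1 ≤ ker (k + 2) := b
      omega

lemma ker_aux : ∀ n, ker (n + 3) = ker n + trib (n + 1)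
  | 0 => by decide
  | 1 => by decide
  | 2 => by decide
  | n + 3 => by
      have h0 := ker_aux n
      have h1 : ker (n + 4) = ker (n + 1) + trib (n + 2) := ker_aux (n + 1)
      have h2 : ker (n + 5) = ker (n + 2) + trib (n + 3) := ker_aux (n + 2)
      have hk : ker (n + 3) = ker (n + 2) + ker (n + 1) + ker n - 1 := rfl
      have hk6 : ker (n + 6) = ker (n + 5) + ker (n + 4) + ker (n + 3) - 1 := rfl
      have ht : trib (n + 4) = trib (n + 3) + trib (n + 2) + trib (n + 1) := rfl
      have p1 : 1 ≤ ker (n + 1) := ker_pos n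
      have p2 : 1 ≤ ker (n + 2) := ker_pos (n + 1)
      show ker (n + 6) = ker (n + 3) + trib (n + 4)
      omega

/-- For all m ≥ 3, k_m = k_{m-3} + t_{m-4}.  (Here `trib (m-2)` = t_{m-4}.) -/
theorem kernel_eq_kernel_add_trib (m : ℕ) (hm : 3 ≤ m) :
    ker m = ker (m - 3) + trib (m - 2) := by
  obtain ⟨n, rfl⟩ := Nat.exists_eq_add_of_le hm
  rw [show 3 + n = n + 3 by omega]
  simpa using ker_aux n
end

section
/- For m ≥ 4, define Δ_m = ∑_{i=4}^{m} (k_i − 1). Then 2·Δ_m = t_{m-2} + t_{m-3} − m. -/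
lemma ker_ge_one : ∀ n, 1 ≤ ker (n + 1) := by
  have h : ∀ n, 1 ≤ ker (n + 1) ∧ 1 ≤ ker (n + 2) ∧ 1 ≤ ker (n + 3) := by
    intro n
    induction n with
    | zero => refine ⟨le_refl _, le_refl _, ?_⟩; simp [ker]
    | succ k ih =>
      refine ⟨ih.2.1, ih.2.2, ?_⟩
      show 1 ≤ ker (k + 3) + ker (k + 2) + ker (k + 1) - 1
      omega
  exact fun n => (h n).1

lemma two_ker (n : ℕ) : 2 * (ker (n + 2) : ℤ) + trib n = trib (n + 2) + 1 := by
  have h : ∀ n, (2 * (ker (n + 2) : ℤ) + trib n = trib (n + 2) + 1) ∧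
      (2 * (ker (n + 3) : ℤ) + trib (n + 1) = trib (n + 3) + 1) ∧
      (2 * (ker (n + 4) : ℤ) + trib (n + 2) = trib (n + 4) + 1) := by
    intro n
    induction n with
    | zero => norm_num [ker, trib]
    | succ k ih =>
      refine ⟨ih.2.1, ih.2.2, ?_⟩
      have hk : ker (k + 5) = ker (k + 4) + ker (k + 3) + ker (k + 2) - 1 := rfl
      have hx : 1 ≤ ker (k + 4) := ker_ge_one (k + 3)
      have h1 : 1 ≤ ker (k + 4) + ker (k + 3) + ker (k + 2) := by omega
      have hkz : (ker (k + 5) : ℤ) = ker (k + 4) + ker (k + 3) + ker (k + 2) - 1 := by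
        rw [hk, Nat.cast_sub h1]; push_cast; ring
      have ht : (trib (k + 5) : ℤ) = trib (k + 4) + trib (k + 3) + trib (k + 2) := by
        show ((trib (k + 4) + trib (k + 3) + trib (k + 2) : ℕ) : ℤ) = _
        push_cast; ring
      have ht2 : (trib (k + 3) : ℤ) = trib (k + 2) + trib (k + 1) + trib k := by
        show ((trib (k + 2) + trib (k + 1) + trib k : ℕ) : ℤ) = _
        push_cast; ring
      obtain ⟨e1, e2, e3⟩ := ih
      show 2 * (ker (k + 5) : ℤ) + trib (k + 3) = trib (k + 5) + 1
      rw [hkz, ht, ht2]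
      linarith
  exact (h n).1

/-- For m ≥ 4, with Δ_m = ∑_{i=4}^{m} (k_i − 1), we have 2·Δ_m = t_{m-2} + t_{m-3} − m
(stated over ℤ; `trib m` = t_{m-2}, `trib (m-1)` = t_{m-3}). -/
theorem two_mul_Delta (m : ℕ) (hm : 4 ≤ m) :
    2 * ∑ i ∈ Finset.Icc 4 m, ((ker i : ℤ) - 1) =
      (trib m : ℤ) + trib (m - 1) - m := by
  induction m with
  | zero => omega
  | succ k ih =>
    rcases Nat.lt_or_ge k 4 with h4 | h4
    · interval_cases k
      · omega
      · omega
      · omega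
      · norm_num [Finset.Icc_self]
        norm_num [ker, trib]
    · have hsum : Finset.Icc 4 (k + 1) = insert (k + 1) (Finset.Icc 4 k) := by
        exact (Finset.insert_Icc_right_eq_Icc_add_one (by omega)).symm
      rw [hsum, Finset.sum_insert (by simp), mul_add, ih h4]
      have hk1 : k + 1 - 1 = k := rfl
      rw [hk1]
      obtain ⟨j, rfl⟩ : ∃ j, k = j + 1 := ⟨k - 1, by omega⟩
      have h2 := two_ker j
      have hj : j + 1 - 1 = j := rfl
      rw [hj]
      push_cast
      linarith
end

section
/- For every m ≥ 0, the Tribonacci word contains a square of length 2·t_m; concretely, the word T_m T_m is a factor of the infinite Tribonacci sequence 𝕋 (equivalently, a factor of T_{m+5}). -/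
inductive Alpha | a | b | c
  deriving DecidableEq, Repr

/-- The Tribonacci substitution σ(a) = ab, σ(b) = ac, σ(c) = a. -/
def sub : Alpha → List Alpha
  | .a => [.a, .b]
  | .b => [.a, .c]
  | .c => [.a]

/-- T_m = σ^m(a). -/
def T (m : ℕ) : List Alpha := (fun w => w.flatMap sub)^[m] [.a]

lemma iter_append (m : ℕ) (x y : List Alpha) :
    (fun w => w.flatMap sub)^[m] (x ++ y) =
    (fun w => w.flatMap sub)^[m] x ++ (fun w => w.flatMap sub)^[m] y := by
  induction m generalizing x y with
  | zero => simp
  | succ n ih =>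
    rw [Function.iterate_succ_apply, Function.iterate_succ_apply,
      Function.iterate_succ_apply]
    simp only [List.flatMap_append]
    exact ih _ _

lemma iter_infix (m : ℕ) {x y : List Alpha} (h : x <:+: y) :
    (fun w => w.flatMap sub)^[m] x <:+: (fun w => w.flatMap sub)^[m] y := by
  obtain ⟨u, v, rfl⟩ := h
  rw [iter_append, iter_append]
  exact ⟨_, _, rfl⟩

/-- For every m ≥ 0, the square T_m T_m (of length 2·t_m) occurs in the Tribonacci
sequence; concretely it is a factor of T_{m+5}. -/
theorem square_Tm_infix (m : ℕ) : (T m ++ T m) <:+: T (m + 5) := by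
  have h : ([Alpha.a] ++ [Alpha.a]) <:+: T 5 := by decide
  have := iter_infix m h
  rwa [iter_append, show T 5 = (fun w => w.flatMap sub)^[5] [Alpha.a] from rfl,
    ← Function.iterate_add_apply] at this
end
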